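/- Let A ⊆ Δ^n be Lebesgue measurable and permutation invariant. Let Z be an integrable real random variable with cdf F(z) = P[Z ≤ z] and finite essential supremum, let Z_1,…,Z_{n−1} be iid random variables each with the same law as Z, and set Z_n := esssup Z. Let Z_(1) ≤ Z_(2) ≤ ⋯ ≤ Z_(n) denote the increasing rearrangement (order statistics) of Z_1,…,Z_n, and define the coverages W_i = F(Z_(i)) − F(Z_(i−1)) for i ∈ {1,…,n}, with the convention F(Z_(0)) := 0. Then P[ sup_{μ ∈ A} ∑_{i=1}^n μ_i Z_i ≥ E[Z] ] ≥ P[ W ∈ A + K^n ]. -/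

import Mathlib

open MeasureTheory ProbabilityTheory Pointwise

/-- The majorization cone `K^n`. -/
def majorCone (n : ℕ) : Set (Fin n → ℝ) :=
  {x | (∀ k : ℕ, k < n →
          0 ≤ ∑ i ∈ Finset.univ.filter (fun i : Fin n => (i : ℕ) < k), x i) ∧
        ∑ i, x i = 0}

/-- Increasing rearrangement (order statistics) of a finite tuple. -/
noncomputable def sortedVec {α : Type*} [LinearOrder α] {n : ℕ} (z : Fin n → α) : Fin n → α :=
  z ∘ Tuple.sort z

/-- The coverage `F(z_i) - F(z_{i-1})`, with the convention `F(z_0) := 0`. -/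
noncomputable def coverage {n : ℕ} (F : ℝ → ℝ) (z : Fin n → ℝ) (i : Fin n) : ℝ :=
  F (z i) - (if h : 0 < (i : ℕ) then F (z ⟨(i : ℕ) - 1, by have := i.isLt; omega⟩) else 0)

/-- The full sample vector `(Z_1, …, Z_{n-1}, M)`. -/
def fullVec {Ω : Type*} {n : ℕ} (Zs : Fin (n - 1) → Ω → ℝ) (M : ℝ) (i : Fin n) (ω : Ω) : ℝ :=
  if h : (i : ℕ) < n - 1 then Zs ⟨(i : ℕ), h⟩ ω else M

/-- let `A ⊆ Δ^n` be measurable and permutation invariant, `Z` an integrable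
real random variable with cdf `F` and finite essential supremum `M`, `Z_1, …, Z_{n-1}` iid
copies of `Z`, `Z_n := M`, and `W` the coverage vector of the order statistics. Then
`P[sup_{μ ∈ A} ∑ μ_i Z_i ≥ E[Z]] ≥ P[W ∈ A + K^n]`. -/
lemma aux_filter_sum {n : ℕ} (x : Fin n → ℝ) (k : ℕ) (hk : k ≤ n) :
    ∑ j ∈ Finset.range k, (if h : j < n then x ⟨j, h⟩ else 0) =
      ∑ i ∈ Finset.univ.filter (fun i : Fin n => (i : ℕ) < k), x i := by
  have h1 : ∑ j ∈ Finset.range k, (if h : j < n then x ⟨j, h⟩ else 0) =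
      ∑ j ∈ Finset.range n, (if j < k then (if h : j < n then x ⟨j, h⟩ else 0) else 0) := by
    rw [← Finset.sum_subset (Finset.range_subset_range.2 hk)
      (fun j _ hj => if_neg (by simpa using hj))]
    exact Finset.sum_congr rfl fun j hj => (if_pos (Finset.mem_range.1 hj)).symm
  rw [h1, ← Fin.sum_univ_eq_sum_range
    (fun j => if j < k then (if h : j < n then x ⟨j, h⟩ else 0) else 0) n,
    Finset.sum_filter]
  exact Finset.sum_congr rfl fun i _ => by
    by_cases h : (i : ℕ) < k
    · simp [h, i.isLt]
    · simp [h]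

lemma aux_abel {n : ℕ} (y x : Fin n → ℝ) (hy : Monotone y) (hn : 1 ≤ n)
    (hx : x ∈ majorCone n) : ∑ i, x i * y i ≤ 0 := by
  set x' : ℕ → ℝ := fun j => if h : j < n then x ⟨j, h⟩ else 0 with hx'
  set y' : ℕ → ℝ := fun k => y ⟨min k (n - 1), by omega⟩ with hy'
  have hy'mono : Monotone y' := fun a b hab => hy (by
    simp only [Fin.mk_le_mk]; exact min_le_min hab le_rfl)
  have hps : ∀ k, k ≤ n → 0 ≤ ∑ j ∈ Finset.range k, x' j := by
    intro k hk
    rw [aux_filter_sum x k hk]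
    rcases lt_or_eq_of_le hk with h | h
    · exact hx.1 k h
    · subst h
      rw [Finset.filter_true_of_mem (fun i _ => i.isLt), hx.2]
  have htot : ∑ j ∈ Finset.range n, x' j = 0 := by
    rw [← Fin.sum_univ_eq_sum_range x' n, ← hx.2]
    exact Finset.sum_congr rfl fun i _ => by simp [hx', i.isLt]
  have heq : ∑ i, x i * y i = ∑ j ∈ Finset.range n, y' j • x' j := by
    rw [← Fin.sum_univ_eq_sum_range (fun j => y' j • x' j) n]
    refine Finset.sum_congr rfl fun i _ => ?_
    have h1 : y' (i : ℕ) = y i := by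
      simp only [hy']
      congr 1
      exact Fin.ext (by have := i.isLt; simp; omega)
    have h2 : x' (i : ℕ) = x i := by simp [hx', i.isLt]
    rw [h1, h2, smul_eq_mul, mul_comm]
  rw [heq, Finset.sum_range_by_parts y' x' n, htot, smul_zero, zero_sub,
    neg_nonpos]
  refine Finset.sum_nonneg fun i hi => ?_
  have hi' := Finset.mem_range.1 hi
  exact smul_nonneg (sub_nonneg.2 (hy'mono (Nat.le_succ i))) (hps (i + 1) (by omega))

lemma aux_int {Ω : Type*} [MeasurableSpace Ω] (P : Measure Ω) [IsProbabilityMeasure P]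
    (Z : Ω → ℝ) (hZmeas : Measurable Z) (hZint : Integrable Z P)
    {n : ℕ} (hn : 1 ≤ n) (y : Fin n → ℝ) (hy : Monotone y)
    (hfull : P {ω | Z ω ≤ y ⟨n - 1, by omega⟩} = 1) :
    ∫ x, Z x ∂P ≤ ∑ i, coverage (fun t => (P {ω | Z ω ≤ t}).toReal) y i * y i := by
  set F : ℝ → ℝ := fun t => (P {ω | Z ω ≤ t}).toReal with hF
  set y' : ℕ → ℝ := fun k => y ⟨min k (n - 1), by omega⟩ with hy'
  have hy'mono : Monotone y' := fun a b hab => hy (by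
    simp only [Fin.mk_le_mk]; exact min_le_min hab le_rfl)
  have hy'eq : ∀ i : Fin n, y' (i : ℕ) = y i := fun i => by
    simp only [hy']; congr 1; exact Fin.ext (by have := i.isLt; simp; omega)
  set s : ℕ → Set Ω := fun k => {ω | Z ω ≤ y' k} with hs
  have hs_meas : ∀ k, MeasurableSet (s k) := fun k => hZmeas measurableSet_Iic
  have hs_mono : Monotone s := fun a b hab ω hω => le_trans hω (hy'mono hab)
  set D : ℕ → Set Ω := fun k => s k \ (if k = 0 then ∅ else s (k - 1)) with hD
  have hD_meas : ∀ k, MeasurableSet (D k) := by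
    intro k
    refine (hs_meas k).diff ?_
    by_cases h : k = 0 <;> simp [h, hs_meas]
  have hD_sub : ∀ k, D k ⊆ s k := fun k => Set.diff_subset
  have hD_disj : ∀ j k, j < k → Disjoint (D j) (D k) := by
    intro j k hjk
    have h1 : D j ⊆ s (k - 1) := (hD_sub j).trans (hs_mono (by omega))
    have h2 : Disjoint (s (k - 1)) (D k) := by
      simp only [hD, if_neg (by omega : ¬ k = 0)]
      exact Set.disjoint_sdiff_right
    exact h2.mono_left h1
  have hUnion : ∀ m : ℕ, (⋃ k ∈ Finset.range (m + 1), D k) = s m := by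
    intro m
    induction m with
    | zero => simp [hD]
    | succ m ih =>
      rw [Finset.range_add_one, Finset.set_biUnion_insert, ih]
      simp only [hD, if_neg (Nat.succ_ne_zero m), Nat.add_sub_cancel]
      rw [Set.union_comm]
      exact Set.union_diff_cancel (hs_mono (Nat.le_succ m))
  have hsn : P (s (n - 1)) = 1 := by
    have : y' (n - 1) = y ⟨n - 1, by omega⟩ := by simp [hy']
    simpa [hs, this] using hfull
  have hcompl : P (s (n - 1))ᶜ = 0 := by
    rw [measure_compl (hs_meas _) (measure_ne_top _ _), hsn, measure_univ, tsub_self]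
  have step1 : ∫ x, Z x ∂P = ∑ k ∈ Finset.range n, ∫ x in D k, Z x ∂P := by
    rw [← integral_add_compl (hs_meas (n - 1)) hZint,
      Measure.restrict_eq_zero.mpr hcompl, integral_zero_measure, add_zero]
    have hr : (⋃ k ∈ Finset.range n, D k) = s (n - 1) := by
      have := hUnion (n - 1)
      rwa [Nat.sub_add_cancel hn] at this
    rw [← hr]
    exact integral_biUnion_finset _ (fun k _ => hD_meas k)
      (fun j _ k _ hjk => by
        rcases Nat.lt_or_ge j k with h | h
        · exact hD_disj j k h
        · exact (hD_disj k j (by omega)).symm)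
      (fun k _ => hZint.integrableOn)
  have step2 : ∀ k, ∫ x in D k, Z x ∂P ≤ (P (D k)).toReal * y' k := by
    intro k
    have h1 : ∫ x in D k, Z x ∂P ≤ ∫ _ in D k, y' k ∂P :=
      setIntegral_mono_on hZint.integrableOn (integrable_const _).integrableOn
        (hD_meas k) (fun ω hω => (hD_sub k hω : Z ω ≤ y' k))
    rwa [setIntegral_const, smul_eq_mul] at h1
  have step3 : ∀ k, (hk : k < n) → (P (D k)).toReal = coverage F y ⟨k, hk⟩ := by
    intro k hk
    match k, hk with
    | 0, hk =>
      have hDe : D 0 = s 0 := by simp [hD]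
      have e1 : y' 0 = y ⟨0, hk⟩ := hy'eq ⟨0, hk⟩
      have hcov : coverage F y ⟨0, hk⟩ = F (y ⟨0, hk⟩) := by
        simp only [coverage]
        rw [dif_neg (by simp), sub_zero]
      rw [hDe, hcov, ← e1]
    | (m + 1), hk =>
      have hm : m < n := by omega
      have hDe : D (m + 1) = s (m + 1) \ s m := by simp [hD]
      have hmeas_eq : P (s m) + P (s (m + 1) \ s m) = P (s (m + 1)) := by
        rw [← measure_union Set.disjoint_sdiff_right ((hs_meas _).diff (hs_meas _)),
          Set.union_diff_cancel (hs_mono (Nat.le_succ m))]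
      have hreal : (P (D (m + 1))).toReal = (P (s (m + 1))).toReal - (P (s m)).toReal := by
        rw [hDe, ← hmeas_eq, ENNReal.toReal_add (measure_ne_top _ _) (measure_ne_top _ _)]
        ring
      have hcov : coverage F y ⟨m + 1, hk⟩ = F (y ⟨m + 1, hk⟩) - F (y ⟨m, hm⟩) := by
        simp only [coverage]
        rw [dif_pos (Nat.succ_pos m)]
        rfl
      have e1 : y' (m + 1) = y ⟨m + 1, hk⟩ := hy'eq ⟨m + 1, hk⟩
      have e2 : y' m = y ⟨m, hm⟩ := hy'eq ⟨m, hm⟩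
      rw [hreal, hcov, ← e1, ← e2]
  calc ∫ x, Z x ∂P = ∑ k ∈ Finset.range n, ∫ x in D k, Z x ∂P := step1
    _ ≤ ∑ k ∈ Finset.range n, (P (D k)).toReal * y' k :=
        Finset.sum_le_sum fun k _ => step2 k
    _ = ∑ i : Fin n, coverage F y i * y i := by
        rw [← Fin.sum_univ_eq_sum_range (fun k => (P (D k)).toReal * y' k) n]
        exact Finset.sum_congr rfl fun i _ => by
          rw [step3 (i : ℕ) i.isLt, hy'eq i]

theorem prob_sup_ge_mean_ge_prob_coverage
    {Ω : Type*} [MeasurableSpace Ω] (P : Measure Ω) [IsProbabilityMeasure P]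
    (n : ℕ) (hn : 1 ≤ n)
    (A : Set (Fin n → ℝ)) (hAsub : A ⊆ stdSimplex ℝ (Fin n)) (hAmeas : MeasurableSet A)
    (hAperm : ∀ π : Equiv.Perm (Fin n), ∀ μ ∈ A, (fun i => μ (π i)) ∈ A)
    (Z : Ω → ℝ) (hZmeas : Measurable Z) (hZint : Integrable Z P)
    (M : ℝ) (hM_ub : ∀ᵐ ω ∂P, Z ω ≤ M) (hM_least : ∀ c : ℝ, (∀ᵐ ω ∂P, Z ω ≤ c) → M ≤ c)
    (Zs : Fin (n - 1) → Ω → ℝ) (hZs_meas : ∀ i, Measurable (Zs i))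
    (hZs_indep : iIndepFun Zs P)
    (hZs_law : ∀ i, Measure.map (Zs i) P = Measure.map Z P)
    (F : ℝ → ℝ) (hF : F = fun t => (P {ω | Z ω ≤ t}).toReal)
    (W : Ω → Fin n → ℝ)
    (hW : W = fun ω => coverage F (sortedVec fun j => fullVec Zs M j ω)) :
    P {ω | W ω ∈ A + majorCone n} ≤
      P {ω | (∫ x, Z x ∂P) ≤
        sSup ((fun μ => ∑ i, μ i * fullVec Zs M i ω) '' A)} := by
  refine measure_mono fun ω hω => ?_
  simp only [Set.mem_setOf_eq] at hω ⊢
  obtain ⟨μ, hμA, x, hxK, hμx⟩ := hω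
  set z : Fin n → ℝ := fun j => fullVec Zs M j ω with hz
  set σ : Equiv.Perm (Fin n) := Tuple.sort z with hσ
  have hymono : Monotone (z ∘ σ) := Tuple.monotone_sort z
  have hzlast : z ⟨n - 1, by omega⟩ = M := by
    simp [hz, fullVec]
  have hylast : M ≤ (z ∘ σ) ⟨n - 1, by omega⟩ := by
    have h1 : (z ∘ σ) (σ⁻¹ ⟨n - 1, by omega⟩) = M := by
      simp [hzlast]
    rw [← h1]
    refine hymono ?_
    have h2 := (σ⁻¹ (⟨n - 1, by omega⟩ : Fin n)).isLt
    refine Fin.le_def.mpr ?_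
    simp only [Fin.val_mk]
    omega
  have hPM : P {ω' | Z ω' ≤ M} = 1 := by
    have h0 : P {ω' | ¬ Z ω' ≤ M} = 0 := ae_iff.mp hM_ub
    have hcm : MeasurableSet {ω' | ¬ Z ω' ≤ M} :=
      (hZmeas measurableSet_Iic : MeasurableSet {ω' | Z ω' ≤ M}).compl
    have hset : {ω' | Z ω' ≤ M} = {ω' | ¬ Z ω' ≤ M}ᶜ := by ext ω'; simp
    rw [hset, measure_compl hcm (measure_ne_top _ _), h0, measure_univ, tsub_zero]
  have hfull : P {ω' | Z ω' ≤ (z ∘ σ) ⟨n - 1, by omega⟩} = 1 := by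
    refine le_antisymm prob_le_one ?_
    rw [← hPM]
    exact measure_mono fun ω' h => le_trans h hylast
  have hkey := aux_int P Z hZmeas hZint hn (z ∘ σ) hymono hfull
  have hWω : W ω = coverage F (z ∘ σ) := by rw [hW]; rfl
  have habel : ∑ i, x i * (z ∘ σ) i ≤ 0 := aux_abel (z ∘ σ) x hymono hn hxK
  have hchain : ∫ x', Z x' ∂P ≤ ∑ i, μ i * (z ∘ σ) i := by
    calc ∫ x', Z x' ∂P
        ≤ ∑ i, coverage (fun t => (P {ω' | Z ω' ≤ t}).toReal) (z ∘ σ) i * (z ∘ σ) i := hkey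
      _ = ∑ i, (W ω) i * (z ∘ σ) i := by
          rw [hWω, hF]
      _ = ∑ i, (μ i + x i) * (z ∘ σ) i := by
          rw [← hμx]; rfl
      _ = (∑ i, μ i * (z ∘ σ) i) + ∑ i, x i * (z ∘ σ) i := by
          rw [← Finset.sum_add_distrib]
          exact Finset.sum_congr rfl fun i _ => by ring
      _ ≤ ∑ i, μ i * (z ∘ σ) i := by linarith
  have hreindex : ∑ i, μ i * (z ∘ σ) i = ∑ j, μ (σ⁻¹ j) * z j := by
    rw [← Equiv.sum_comp σ (fun j => μ (σ⁻¹ j) * z j)]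
    exact Finset.sum_congr rfl fun i _ => by simp
  have hμ' : (fun j => μ (σ⁻¹ j)) ∈ A := hAperm σ⁻¹ μ hμA
  have hbdd : BddAbove ((fun ν => ∑ i, ν i * fullVec Zs M i ω) '' A) := by
    refine ⟨∑ i, |z i|, ?_⟩
    rintro _ ⟨ν, hν, rfl⟩
    have hνs := hAsub hν
    have hν1 : ∀ i, ν i ≤ 1 := by
      intro i
      calc ν i ≤ ∑ j, ν j := Finset.single_le_sum (fun j _ => hνs.1 j) (Finset.mem_univ i)
        _ = 1 := hνs.2
    refine Finset.sum_le_sum fun i _ => ?_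
    calc ν i * fullVec Zs M i ω = ν i * z i := rfl
      _ ≤ ν i * |z i| := mul_le_mul_of_nonneg_left (le_abs_self _) (hνs.1 i)
      _ ≤ 1 * |z i| := mul_le_mul_of_nonneg_right (hν1 i) (abs_nonneg _)
      _ = |z i| := one_mul _
  have hmem : (∑ j, μ (σ⁻¹ j) * z j) ∈ ((fun ν => ∑ i, ν i * fullVec Zs M i ω) '' A) :=
    ⟨fun j => μ (σ⁻¹ j), hμ', rfl⟩
  calc ∫ x', Z x' ∂P ≤ ∑ j, μ (σ⁻¹ j) * z j := hreindex ▸ hchain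
    _ ≤ sSup ((fun ν => ∑ i, ν i * fullVec Zs M i ω) '' A) := le_csSup hbdd hmem
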